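/- Let n ≥ 2 and ε₀ ∈ (0,1). Let λ₁, …, λₙ be real numbers with H := ∑_i λ_i satisfying min_i λ_i ≤ −ε₀·H < 0 (so H > 0). Let A : Fin n → Fin n → ℝ be the diagonal matrix with A i i = −λ_i, and let T : Fin n → Fin n → Fin n → ℝ be a fully symmetric 3-tensor. Then ‖A‖² > 0 and ‖T‖² − (1/‖A‖²)·∑_k ( ∑_{i,j} A i j · T i j k )² ≥ (ε₀²/(8n²)) · ‖T‖² · H² / ‖A‖². Equivalently, ∑_{i,j,k,p,q} (A i j · T k p q − T i j k · A p q)² ≥ (ε₀²/(4n²)) · H² · ‖T‖². -/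

import Mathlib

open Finset

private lemma two_term_le_sum {n : ℕ} (f : Fin n → ℝ) (h : ∀ i, 0 ≤ f i) {i j : Fin n}
    (hij : i ≠ j) : f i + f j ≤ ∑ k, f k := by
  have h1 : ∑ k ∈ ({i, j} : Finset (Fin n)), f k ≤ ∑ k, f k :=
    Finset.sum_le_sum_of_subset_of_nonneg (Finset.subset_univ _) (fun k _ _ => h k)
  rwa [Finset.sum_pair hij] at h1

private lemma lagrange {n : ℕ} (a b : Fin n → ℝ) :
    ∑ p, ∑ q, (a p * b q - a q * b p) ^ 2
      = 2 * ((∑ i, a i ^ 2) * (∑ i, b i ^ 2) - (∑ i, a i * b i) ^ 2) := by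
  have h : ∀ p, ∑ q, (a p * b q - a q * b p) ^ 2
      = a p ^ 2 * (∑ i, b i ^ 2) + b p ^ 2 * (∑ i, a i ^ 2)
        - 2 * ((a p * b p) * ∑ i, a i * b i) := by
    intro p
    simp only [Finset.mul_sum, ← Finset.sum_add_distrib, ← Finset.sum_sub_distrib]
    exact Finset.sum_congr rfl fun q _ => by ring
  rw [Finset.sum_congr rfl fun p _ => h p]
  rw [Finset.sum_sub_distrib, Finset.sum_add_distrib, ← Finset.sum_mul, ← Finset.sum_mul,
    ← Finset.mul_sum, ← Finset.sum_mul]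
  ring

private lemma cs_nonneg {n : ℕ} (a b : Fin n → ℝ) :
    0 ≤ (∑ i, a i ^ 2) * (∑ i, b i ^ 2) - (∑ i, a i * b i) ^ 2 := by
  have h := lagrange a b
  have h2 : 0 ≤ ∑ p, ∑ q, (a p * b q - a q * b p) ^ 2 :=
    Finset.sum_nonneg fun p _ => Finset.sum_nonneg fun q _ => sq_nonneg _
  linarith

private lemma cs_term {n : ℕ} (a b : Fin n → ℝ) {p q : Fin n} (hpq : p ≠ q) :
    (a p * b q - a q * b p) ^ 2
      ≤ (∑ i, a i ^ 2) * (∑ i, b i ^ 2) - (∑ i, a i * b i) ^ 2 := by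
  have h := lagrange a b
  set F : Fin n → Fin n → ℝ := fun x y => (a x * b y - a y * b x) ^ 2 with hF
  have hg : ∀ x, 0 ≤ ∑ y, F x y := fun x => Finset.sum_nonneg fun y _ => sq_nonneg _
  have h1 : F p q ≤ ∑ y, F p y :=
    Finset.single_le_sum (f := fun y => F p y) (fun y _ => sq_nonneg _) (Finset.mem_univ q)
  have h2 : F q p ≤ ∑ y, F q y :=
    Finset.single_le_sum (f := fun y => F q y) (fun y _ => sq_nonneg _) (Finset.mem_univ p)
  have h3 : (∑ y, F p y) + (∑ y, F q y) ≤ ∑ x, ∑ y, F x y :=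
    two_term_le_sum (fun x => ∑ y, F x y) hg hpq
  have hsym : F q p = F p q := by simp only [hF]; ring
  have h4 : 2 * F p q ≤ 2 * ((∑ i, a i ^ 2) * (∑ i, b i ^ 2) - (∑ i, a i * b i) ^ 2) := by
    rw [← h]; linarith
  have hFpq : F p q = (a p * b q - a q * b p) ^ 2 := rfl
  linarith [hFpq ▸ h4]

private lemma diag_collapse {n : ℕ} {A : Fin n → Fin n → ℝ} {a : Fin n → ℝ}
    (hA : ∀ i j, A i j = if i = j then a i else 0) (g : Fin n → Fin n → ℝ) :
    ∑ i, ∑ j, A i j * g i j = ∑ i, a i * g i i := by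
  refine Finset.sum_congr rfl fun i _ => ?_
  rw [Finset.sum_eq_single i]
  · rw [hA]; simp
  · intro j _ hji; rw [hA]; simp [Ne.symm hji]
  · simp

private lemma diag_sq {n : ℕ} {A : Fin n → Fin n → ℝ} {a : Fin n → ℝ}
    (hA : ∀ i j, A i j = if i = j then a i else 0) :
    ∑ i, ∑ j, (A i j) ^ 2 = ∑ i, a i ^ 2 := by
  calc ∑ i, ∑ j, (A i j) ^ 2 = ∑ i, ∑ j, A i j * A i j :=
        Finset.sum_congr rfl fun i _ => Finset.sum_congr rfl fun j _ => sq (A i j)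
    _ = ∑ i, a i * A i i := diag_collapse hA A
    _ = ∑ i, a i ^ 2 := Finset.sum_congr rfl fun i _ => by rw [hA]; simp [sq]

private lemma slab {n : ℕ} (T : Fin n → Fin n → Fin n → ℝ)
    (hT1 : ∀ i j k, T i j k = T j i k) (hT2 : ∀ i j k, T i j k = T i k j) (k : Fin n) :
    2 * (∑ c, (T k k c) ^ 2) - 2 * (T k k k) ^ 2
      ≤ (∑ p, ∑ q, (T p q k) ^ 2) - ∑ i, (T i i k) ^ 2 := by
  have e1 : ∑ p, ∑ q, (T p q k) ^ 2
      = (∑ q, (T k q k) ^ 2) + ∑ p ∈ Finset.univ.erase k, ∑ q, (T p q k) ^ 2 :=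
    (Finset.add_sum_erase _ _ (Finset.mem_univ k)).symm
  have e2 : ∑ p ∈ Finset.univ.erase k, ((T p p k) ^ 2 + (T p k k) ^ 2)
      ≤ ∑ p ∈ Finset.univ.erase k, ∑ q, (T p q k) ^ 2 := by
    refine Finset.sum_le_sum fun p hp => ?_
    exact two_term_le_sum (fun q => (T p q k) ^ 2) (fun q => sq_nonneg _)
      (Finset.ne_of_mem_erase hp)
  rw [Finset.sum_add_distrib] at e2
  have e3 : ∑ p ∈ Finset.univ.erase k, (T p p k) ^ 2
      = (∑ p, (T p p k) ^ 2) - (T k k k) ^ 2 :=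
    Finset.sum_erase_eq_sub (Finset.mem_univ k)
  have e4 : ∑ p ∈ Finset.univ.erase k, (T p k k) ^ 2
      = (∑ p, (T p k k) ^ 2) - (T k k k) ^ 2 :=
    Finset.sum_erase_eq_sub (Finset.mem_univ k)
  have e5 : ∑ q, (T k q k) ^ 2 = ∑ q, (T k k q) ^ 2 :=
    Finset.sum_congr rfl fun q _ => by rw [hT2 k q k]
  have e6 : ∑ p, (T p k k) ^ 2 = ∑ p, (T k k p) ^ 2 :=
    Finset.sum_congr rfl fun p _ => by rw [hT1 p k k, hT2 k p k]
  linarith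

private lemma slab_nonneg {n : ℕ} (T : Fin n → Fin n → Fin n → ℝ) (k : Fin n) :
    ∑ i, (T i i k) ^ 2 ≤ ∑ p, ∑ q, (T p q k) ^ 2 :=
  Finset.sum_le_sum fun p _ =>
    Finset.single_le_sum (fun q _ => sq_nonneg (T p q k)) (Finset.mem_univ p)

private lemma quint {n : ℕ} (A : Fin n → Fin n → ℝ) (T : Fin n → Fin n → Fin n → ℝ) :
    ∑ i, ∑ j, ∑ k, ∑ p, ∑ q, (A i j * T k p q - T i j k * A p q) ^ 2
    = (∑ i, ∑ j, (A i j) ^ 2) * (∑ x, ∑ y, ∑ z, (T x y z) ^ 2)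
      + (∑ x, ∑ y, ∑ z, (T x y z) ^ 2) * (∑ p, ∑ q, (A p q) ^ 2)
      - 2 * (∑ i, ∑ j, A i j * ∑ k, T i j k * ∑ p, ∑ q, A p q * T k p q) := by
  have step1 : ∑ i, ∑ j, ∑ k, ∑ p, ∑ q, (A i j * T k p q - T i j k * A p q) ^ 2
      = ∑ i, ∑ j, ∑ k, ∑ p, ∑ q,
          ((A i j)^2 * (T k p q)^2 + (T i j k)^2 * (A p q)^2
            - 2 * (A i j * (T i j k * (A p q * T k p q)))) :=
    Finset.sum_congr rfl fun i _ => Finset.sum_congr rfl fun j _ =>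
      Finset.sum_congr rfl fun k _ => Finset.sum_congr rfl fun p _ =>
        Finset.sum_congr rfl fun q _ => by ring
  rw [step1]
  simp only [Finset.sum_add_distrib, Finset.sum_sub_distrib, ← Finset.mul_sum, ← Finset.sum_mul]

set_option maxHeartbeats 1600000 in
theorem stmt_3 (n : ℕ) (hn : 2 ≤ n)
    (ε₀ : ℝ) (hε₀ : ε₀ ∈ Set.Ioo (0 : ℝ) 1)
    (lam : Fin n → ℝ) (H : ℝ) (hH : H = ∑ i, lam i)
    (hmin : ∃ i, lam i ≤ -ε₀ * H) (hneg : -ε₀ * H < 0)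
    (A : Fin n → Fin n → ℝ)
    (hA : ∀ i j, A i j = if i = j then -lam i else 0)
    (T : Fin n → Fin n → Fin n → ℝ)
    (hT1 : ∀ i j k, T i j k = T j i k)
    (hT2 : ∀ i j k, T i j k = T i k j) :
    0 < ∑ i, ∑ j, (A i j) ^ 2 ∧
    (∑ a, ∑ b, ∑ c, (T a b c) ^ 2)
        - (1 / (∑ i, ∑ j, (A i j) ^ 2)) * ∑ k, (∑ i, ∑ j, A i j * T i j k) ^ 2
      ≥ (ε₀ ^ 2 / (8 * (n : ℝ) ^ 2)) * (∑ a, ∑ b, ∑ c, (T a b c) ^ 2) * H ^ 2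
          / (∑ i, ∑ j, (A i j) ^ 2) ∧
    ∑ i, ∑ j, ∑ k, ∑ p, ∑ q, (A i j * T k p q - T i j k * A p q) ^ 2
      ≥ (ε₀ ^ 2 / (4 * (n : ℝ) ^ 2)) * H ^ 2 * (∑ a, ∑ b, ∑ c, (T a b c) ^ 2) := by
  classical
  obtain ⟨hε0, hε1⟩ := hε₀
  -- basic positivity
  have hH0 : 0 < H := by nlinarith
  have hεH : 0 < ε₀ * H := mul_pos hε0 hH0
  -- the diagonal entries
  set d : Fin n → ℝ := fun i => -lam i with hd
  have hA' : ∀ i j, A i j = if i = j then d i else 0 := fun i j => hA i j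
  -- the distinguished index m
  obtain ⟨m, hm⟩ := hmin
  have ham : ε₀ * H ≤ d m := by simp only [hd]; linarith
  -- main quantities
  set N : ℝ := ∑ i, d i ^ 2 with hN
  set TT : ℝ := ∑ x, ∑ y, ∑ z, (T x y z) ^ 2 with hTT
  set W : Fin n → ℝ := fun k => ∑ i, d i * T i i k with hW
  set X : ℝ := ∑ k, (T k k k) ^ 2 with hX
  set P : ℝ := ∑ k, ∑ i, (T i i k) ^ 2 with hP
  have hdN : ∀ i, d i ^ 2 ≤ N :=
    fun i => Finset.single_le_sum (fun i _ => sq_nonneg (d i)) (Finset.mem_univ i)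
  have hN0 : 0 < N := by nlinarith [hdN m]
  have hnn : (2 : ℝ) ≤ (n : ℝ) := by exact_mod_cast hn
  have hnn0 : (n : ℝ) ≠ 0 := by linarith
  -- index l
  have hsumd : ∑ i, d i = -H := by
    simp only [hd, hH]
    rw [← Finset.sum_neg_distrib]
  obtain ⟨l, hlmem, hl⟩ : ∃ l ∈ Finset.univ.erase m, d l ≤ -(ε₀ * H) / ((n : ℝ) - 1) := by
    apply Finset.exists_le_of_sum_le
    · refine Finset.card_pos.mp ?_
      rw [Finset.card_erase_of_mem (Finset.mem_univ m), Finset.card_univ, Fintype.card_fin]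
      omega
    · have hcard : ((Finset.univ.erase m).card : ℝ) = (n : ℝ) - 1 := by
        rw [Finset.card_erase_of_mem (Finset.mem_univ m), Finset.card_univ, Fintype.card_fin]
        have : (1 : ℕ) ≤ n := by omega
        push_cast [Nat.cast_sub this]
        ring
      rw [Finset.sum_const, nsmul_eq_mul, hcard]
      have herase : ∑ i ∈ Finset.univ.erase m, d i = -H - d m :=
        by rw [Finset.sum_erase_eq_sub (Finset.mem_univ m), hsumd]
      have hne1 : (n : ℝ) - 1 ≠ 0 := by linarith
      rw [herase]
      have : ((n : ℝ) - 1) * (-(ε₀ * H) / ((n : ℝ) - 1)) = -(ε₀ * H) := by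
        field_simp
      rw [this]
      linarith
  have hlm : l ≠ m := Finset.ne_of_mem_erase hlmem
  -- β
  set β : ℝ := (ε₀ * H) ^ 2 / (n : ℝ) ^ 2 with hβ
  have hβ0 : 0 < β := by positivity
  have hβm : β ≤ d m ^ 2 := by
    have h1 : β ≤ (ε₀ * H) ^ 2 := by
      apply div_le_self (sq_nonneg _)
      nlinarith
    nlinarith
  have hβN : β ≤ N := hβm.trans (hdN m)
  have hdl : β ≤ d l ^ 2 := by
    have hnpos : (0:ℝ) < (n:ℝ) := by linarith
    have h1 : -(ε₀ * H) / ((n : ℝ) - 1) ≤ -(ε₀ * H) / (n : ℝ) := by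
      rw [div_le_div_iff₀ (by linarith) (by linarith)]
      nlinarith
    have h2 : d l ≤ -(ε₀ * H) / (n : ℝ) := le_trans hl h1
    have h2' : d l * (n : ℝ) ≤ -(ε₀ * H) := by
      rwa [le_div_iff₀ hnpos] at h2
    rw [hβ, div_le_iff₀ (by positivity : (0:ℝ) < (n : ℝ) ^ 2)]
    nlinarith [h2', hεH, sq_nonneg (d l * (n : ℝ) + ε₀ * H)]
  -- per-k energies
  set E : Fin n → ℝ := fun k => N * (∑ i, (T i i k) ^ 2) - (W k) ^ 2 with hE
  have hE0 : ∀ k, 0 ≤ E k := fun k => cs_nonneg d (fun i => T i i k)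
  set sel : Fin n → ℝ := fun k => if k = m then T l l m else T m m k with hsel
  have hkey : ∀ k, β * (T k k k) ^ 2 ≤ 2 * E k + 2 * N * (sel k) ^ 2 := by
    intro k
    have hEk : E k = N * (∑ i, (T i i k) ^ 2) - (W k) ^ 2 := by rw [hE]
    have hWkk : W k = ∑ i, d i * T i i k := by rw [hW]
    by_cases hk : k = m
    · simp only [hsel, if_pos hk]
      rw [hk] at hEk hWkk ⊢
      have hcs := cs_term d (fun i => T i i m) hlm
      nlinarith [hcs, hN, hEk, hWkk, hdN m,
        sq_nonneg (d l * T m m m - 2 * (d m * T l l m)),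
        mul_nonneg (sub_nonneg.2 hdl) (sq_nonneg (T m m m)),
        mul_nonneg (sub_nonneg.2 (hdN m)) (sq_nonneg (T l l m))]
    · simp only [hsel, if_neg hk]
      have hcs := cs_term d (fun i => T i i k) (Ne.symm hk)
      nlinarith [hcs, hN, hEk, hWkk,
        sq_nonneg (d m * T k k k - 2 * (d k * T m m k)),
        mul_nonneg (sub_nonneg.2 hβm) (sq_nonneg (T k k k)),
        mul_nonneg (sub_nonneg.2 (hdN k)) (sq_nonneg (T m m k))]
  have hselP : ∑ k, (sel k) ^ 2 ≤ P - X := by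
    have h1 : ∀ k, (sel k) ^ 2 + (T k k k) ^ 2 ≤ ∑ i, (T i i k) ^ 2 := by
      intro k
      by_cases hk : k = m
      · simp only [hsel, if_pos hk]
        rw [hk]
        exact two_term_le_sum (fun i => (T i i m) ^ 2) (fun i => sq_nonneg _) hlm
      · simp only [hsel, if_neg hk]
        exact two_term_le_sum (fun i => (T i i k) ^ 2) (fun i => sq_nonneg _)
          (Ne.symm hk)
    have h2 : ∑ k, ((sel k) ^ 2 + (T k k k) ^ 2) ≤ ∑ k, ∑ i, (T i i k) ^ 2 :=
      Finset.sum_le_sum fun k _ => h1 k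
    rw [Finset.sum_add_distrib] at h2
    simp only [← hX, ← hP] at h2
    linarith
  -- sum of energies
  set EE : ℝ := ∑ k, E k with hEE
  have hEE0 : 0 ≤ EE := Finset.sum_nonneg fun k _ => hE0 k
  have hXb : β * X ≤ 2 * EE + 2 * N * (P - X) := by
    have h1 : β * X = ∑ k, β * (T k k k) ^ 2 := by rw [hX, Finset.mul_sum]
    have h2 : ∑ k, β * (T k k k) ^ 2 ≤ ∑ k, (2 * E k + 2 * N * (sel k) ^ 2) :=
      Finset.sum_le_sum fun k _ => hkey k
    have h3 : ∑ k, (2 * E k + 2 * N * (sel k) ^ 2)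
        = 2 * EE + 2 * N * ∑ k, (sel k) ^ 2 := by
      rw [Finset.sum_add_distrib, ← Finset.mul_sum, ← Finset.mul_sum, hEE]
    have h4 : 2 * N * ∑ k, (sel k) ^ 2 ≤ 2 * N * (P - X) := by
      apply mul_le_mul_of_nonneg_left hselP
      positivity
    linarith
  -- off-diagonal bounds
  have hTT' : ∑ k, ∑ p, ∑ q, (T p q k) ^ 2 = TT := by
    rw [Finset.sum_comm]
    exact Finset.sum_congr rfl fun p _ => Finset.sum_comm
  have hP' : ∑ k, ∑ c, (T k k c) ^ 2 = P := Finset.sum_comm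
  have hOff2 : 2 * (P - X) ≤ TT - P := by
    have h1 : ∑ k, (2 * (∑ c, (T k k c) ^ 2) - 2 * (T k k k) ^ 2)
        ≤ ∑ k, ((∑ p, ∑ q, (T p q k) ^ 2) - ∑ i, (T i i k) ^ 2) :=
      Finset.sum_le_sum fun k _ => slab T hT1 hT2 k
    rw [Finset.sum_sub_distrib, Finset.sum_sub_distrib, ← Finset.mul_sum, ← Finset.mul_sum,
      hTT', hP', ← hX, ← hP] at h1
    linarith
  have hOff0 : 0 ≤ TT - P := by
    have h1 : ∑ k, ∑ i, (T i i k) ^ 2 ≤ ∑ k, ∑ p, ∑ q, (T p q k) ^ 2 :=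
      Finset.sum_le_sum fun k _ => slab_nonneg T k
    rw [hTT', ← hP] at h1
    linarith
  have hPX0 : 0 ≤ P - X := by
    have h1 : ∑ k, (T k k k) ^ 2 ≤ ∑ k, ∑ i, (T i i k) ^ 2 :=
      Finset.sum_le_sum fun k _ =>
        Finset.single_le_sum (fun i _ => sq_nonneg (T i i k)) (Finset.mem_univ k)
    rw [← hX, ← hP] at h1
    linarith
  -- core inequality
  have hWP : EE = N * P - ∑ k, (W k) ^ 2 := by
    rw [hEE, hP]
    simp only [hE]
    rw [Finset.sum_sub_distrib, ← Finset.mul_sum]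
  have hcore : β * TT ≤ 8 * (N * TT - ∑ k, (W k) ^ 2) := by
    have p1 : β * (P - X) ≤ N * (P - X) := mul_le_mul_of_nonneg_right hβN hPX0
    have p2 : β * (TT - P) ≤ N * (TT - P) := mul_le_mul_of_nonneg_right hβN hOff0
    have p3 : N * (2 * (P - X)) ≤ N * (TT - P) := mul_le_mul_of_nonneg_left hOff2 hN0.le
    have p4 : 0 ≤ N * (TT - P) := mul_nonneg hN0.le hOff0
    nlinarith [hXb, hEE0, hWP]
  -- rewrite the goal quantities
  have hsq : ∑ i, ∑ j, (A i j) ^ 2 = N := diag_sq hA'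
  have hWk : ∀ k, ∑ i, ∑ j, A i j * T i j k = W k :=
    fun k => diag_collapse hA' (fun i j => T i j k)
  refine ⟨?_, ?_, ?_⟩
  · rw [hsq]; exact hN0
  · rw [hsq]
    simp only [hWk]
    rw [ge_iff_le, div_le_iff₀ hN0]
    have hN0' : N ≠ 0 := ne_of_gt hN0
    have hexp : (TT - 1 / N * ∑ k, (W k) ^ 2) * N = N * TT - ∑ k, (W k) ^ 2 := by
      field_simp
    have heq : ε₀ ^ 2 / (8 * (n : ℝ) ^ 2) * TT * H ^ 2 = β * TT / 8 := by
      rw [hβ]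
      field_simp
    linarith [hcore, hexp, heq]
  · rw [quint A T]
    have hV : ∀ k, (∑ p, ∑ q, A p q * T k p q) = W k := by
      intro k
      rw [diag_collapse hA' (fun p q => T k p q)]
      exact Finset.sum_congr rfl fun p _ => by rw [hT1 k p p, hT2 p k p]
    have hlast : ∑ i, ∑ j, A i j * ∑ k, T i j k * ∑ p, ∑ q, A p q * T k p q
        = ∑ k, (W k) ^ 2 := by
      simp only [hV]
      rw [diag_collapse hA' (fun i j => ∑ k, T i j k * W k)]
      have h1 : ∀ i, d i * ∑ k, T i i k * W k = ∑ k, (d i * T i i k) * W k := by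
        intro i
        rw [Finset.mul_sum]
        exact Finset.sum_congr rfl fun k _ => by ring
      rw [Finset.sum_congr rfl fun i _ => h1 i, Finset.sum_comm]
      refine Finset.sum_congr rfl fun k _ => ?_
      rw [← Finset.sum_mul, show (∑ i, d i * T i i k) = W k from by rw [hW], sq]
    rw [hlast, hsq, ← hTT]
    have heq : ε₀ ^ 2 / (4 * (n : ℝ) ^ 2) * H ^ 2 * TT = β * TT / 4 := by
      rw [hβ]
      field_simp
    rw [ge_iff_le, heq]
    linarith
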